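/- For index sets C_1, C_2 with nonempty intersection S = C_1 ∩ C_2 and with P(X_S) everywhere positive on its support appropriately, the KL divergence between P(X_{C_1∪C_2}) and the junction tree distribution P_J(x) = P(x_{C_1})·P(x_{C_2})/P(x_S) equals I(X_{C_1∪C_2}) − [I(X_{C_1}) + I(X_{C_2}) − I(X_{C_1∩C_2})], and this quantity is nonnegative. -/

import Mathlib

open Real Finset

/-- Shannon entropy of a (probability mass) function on a finite type. -/
noncomputable def entH {α : Type*} [Fintype α] (q : α → ℝ) : ℝ :=
  ∑ x, Real.negMulLog (q x)

/-- Marginal of `p` on the coordinate set `A`. -/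
noncomputable def marg {V Λ : Type*} [Fintype V] [DecidableEq V] [Fintype Λ] [DecidableEq Λ]
    (p : (V → Λ) → ℝ) (A : Finset V) : (A → Λ) → ℝ :=
  fun y => ∑ x : V → Λ, if ∀ i : A, x i.1 = y i then p x else 0

/-- Marginal probability of the `A`-part of the full realization `x`. -/
noncomputable def margAt {V Λ : Type*} [Fintype V] [DecidableEq V] [Fintype Λ] [DecidableEq Λ]
    (p : (V → Λ) → ℝ) (A : Finset V) (x : V → Λ) : ℝ :=
  marg p A (fun i => x i.1)

/-- Information content `I(X_A) = ∑_{i∈A} H(X_i) − H(X_A)`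
(this formula automatically gives `0` when `|A| < 2`). -/
noncomputable def info {V Λ : Type*} [Fintype V] [DecidableEq V] [Fintype Λ] [DecidableEq Λ]
    (p : (V → Λ) → ℝ) (A : Finset V) : ℝ :=
  (∑ i ∈ A, entH (marg p {i})) - entH (marg p A)

/-- Kullback–Leibler divergence. -/
noncomputable def KL {α : Type*} [Fintype α] (q r : α → ℝ) : ℝ :=
  ∑ x, q x * Real.log (q x / r x)


section aux
variable {V Λ : Type*} [Fintype V] [DecidableEq V] [Fintype Λ] [DecidableEq Λ]

lemma marg_nonneg (p : (V → Λ) → ℝ) (hp : ∀ x, 0 ≤ p x) (A : Finset V) (y : A → Λ) :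
    0 ≤ marg p A y :=
  Finset.sum_nonneg fun x _ => by split <;> simp [hp x]

lemma sum_marg_mul (p : (V → Λ) → ℝ) (A : Finset V) (g : (A → Λ) → ℝ) :
    ∑ y : A → Λ, marg p A y * g y = ∑ x : V → Λ, p x * g (fun i => x i.1) := by
  unfold marg
  simp_rw [Finset.sum_mul]
  rw [Finset.sum_comm]
  refine Finset.sum_congr rfl fun x _ => ?_
  have h1 : ∀ y : A → Λ, (if ∀ i : A, x i.1 = y i then p x else 0) * g y
      = if (fun i : A => x i.1) = y then p x * g y else 0 := by
    intro y
    by_cases h : (fun i : A => x i.1) = y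
    · rw [if_pos h, if_pos fun i => congrFun h i]
    · rw [if_neg h, if_neg fun hc => h (funext hc), zero_mul]
  simp_rw [h1]
  rw [Finset.sum_ite_eq]
  simp

lemma sum_marg (p : (V → Λ) → ℝ) (A : Finset V) :
    ∑ y : A → Λ, marg p A y = ∑ x : V → Λ, p x := by
  have := sum_marg_mul p A (fun _ => 1)
  simpa using this

lemma entH_marg (p : (V → Λ) → ℝ) (A : Finset V) :
    entH (marg p A) = -∑ x : V → Λ, p x * Real.log (margAt p A x) := by
  unfold entH
  have h1 : ∀ y : A → Λ, Real.negMulLog (marg p A y)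
      = marg p A y * (-Real.log (marg p A y)) := by
    intro y; simp [Real.negMulLog]
  simp_rw [h1]
  rw [sum_marg_mul p A (fun y => -Real.log (marg p A y))]
  simp [margAt, mul_neg]

lemma le_margAt (p : (V → Λ) → ℝ) (hp : ∀ x, 0 ≤ p x) (A : Finset V) (x : V → Λ) :
    p x ≤ margAt p A x := by
  unfold margAt marg
  have := Finset.single_le_sum
    (f := fun x' : V → Λ => if ∀ i : A, x' i.1 = x i.1 then p x' else 0)
    (fun x' _ => by split <;> simp [hp x']) (Finset.mem_univ x)
  simpa using this

lemma marg_mono (p : (V → Λ) → ℝ) (hp : ∀ x, 0 ≤ p x) {A B : Finset V} (h : A ⊆ B)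
    (y : B → Λ) : marg p B y ≤ marg p A (fun i => y ⟨i.1, h i.2⟩) := by
  unfold marg
  refine Finset.sum_le_sum fun x _ => ?_
  by_cases hB : ∀ i : B, x i.1 = y i
  · rw [if_pos hB, if_pos]
    intro i; exact hB ⟨i.1, h i.2⟩
  · rw [if_neg hB]; split <;> simp [hp x]

end aux

section aux2
variable {V Λ : Type*} [Fintype V] [DecidableEq V] [Fintype Λ] [DecidableEq Λ]

def glueEquiv (C1 C2 : Finset V) : ((↥C1 → Λ) × (↥(C2 \ C1) → Λ)) ≃ (↥(C1 ∪ C2) → Λ) where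
  toFun zw i := if h : i.1 ∈ C1 then zw.1 ⟨i.1, h⟩
    else zw.2 ⟨i.1, Finset.mem_sdiff.2 ⟨(Finset.mem_union.1 i.2).resolve_left h, h⟩⟩
  invFun y := (fun i => y ⟨i.1, Finset.mem_union_left _ i.2⟩,
               fun i => y ⟨i.1, Finset.mem_union_right _ (Finset.mem_sdiff.1 i.2).1⟩)
  left_inv zw := by
    refine Prod.ext (funext fun i => ?_) (funext fun i => ?_)
    · exact dif_pos i.2
    · exact dif_neg (Finset.mem_sdiff.1 i.2).2
  right_inv y := by
    funext i
    dsimp only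
    split <;> rfl

lemma marg_marg (p : (V → Λ) → ℝ) (C1 C2 : Finset V) (z : ↥(C1 ∩ C2) → Λ) :
    ∑ w : ↥(C2 \ C1) → Λ,
      marg p C2 (fun i => if h : i.1 ∈ C1 then z ⟨i.1, Finset.mem_inter.2 ⟨h, i.2⟩⟩
        else w ⟨i.1, Finset.mem_sdiff.2 ⟨i.2, h⟩⟩)
      = marg p (C1 ∩ C2) z := by
  unfold marg
  rw [Finset.sum_comm]
  refine Finset.sum_congr rfl fun x _ => ?_
  by_cases hz : ∀ i : ↥(C1 ∩ C2), x i.1 = z i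
  · rw [if_pos hz]
    have h1 : ∀ w : ↥(C2 \ C1) → Λ,
        (∀ i : ↥C2, x i.1 = if h : i.1 ∈ C1 then z ⟨i.1, Finset.mem_inter.2 ⟨h, i.2⟩⟩
          else w ⟨i.1, Finset.mem_sdiff.2 ⟨i.2, h⟩⟩) ↔
        ((fun i : ↥(C2 \ C1) => x i.1) = w) := by
      intro w
      constructor
      · intro hc
        funext i
        have h2 := hc ⟨i.1, (Finset.mem_sdiff.1 i.2).1⟩
        dsimp only at h2
        rw [dif_neg (Finset.mem_sdiff.1 i.2).2] at h2
        exact h2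
      · rintro rfl i
        by_cases h : i.1 ∈ C1
        · rw [dif_pos h]; exact hz ⟨i.1, Finset.mem_inter.2 ⟨h, i.2⟩⟩
        · rw [dif_neg h]
    simp_rw [h1]
    rw [Finset.sum_ite_eq]
    simp
  · rw [if_neg hz]
    refine Finset.sum_eq_zero fun w _ => ?_
    rw [if_neg]
    intro hc
    apply hz
    intro i
    have h2 := hc ⟨i.1, (Finset.mem_inter.1 i.2).2⟩
    dsimp only at h2
    rw [dif_pos (Finset.mem_inter.1 i.2).1] at h2
    exact h2

end aux2

section aux3
variable {V Λ : Type*} [Fintype V] [DecidableEq V] [Fintype Λ] [DecidableEq Λ]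

lemma sum_r_le_one (p : (V → Λ) → ℝ) (hp : ∀ x, 0 ≤ p x) (hsum : ∑ x, p x = 1)
    (C1 C2 : Finset V) :
    ∑ y : ↥(C1 ∪ C2) → Λ,
      (if marg p (C1 ∩ C2)
          (fun i => y ⟨i.1, Finset.mem_union_left C2 (Finset.mem_of_mem_inter_left i.2)⟩) = 0
       then 0
       else marg p C1 (fun i => y ⟨i.1, Finset.mem_union_left C2 i.2⟩) *
            marg p C2 (fun i => y ⟨i.1, Finset.mem_union_right C1 i.2⟩) /
            marg p (C1 ∩ C2)
              (fun i => y ⟨i.1, Finset.mem_union_left C2 (Finset.mem_of_mem_inter_left i.2)⟩))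
      ≤ 1 := by
  rw [← Equiv.sum_comp (glueEquiv C1 C2)]
  rw [Fintype.sum_prod_type]
  have hstep : ∀ z : ↥C1 → Λ,
      (∑ w : ↥(C2 \ C1) → Λ,
        (if marg p (C1 ∩ C2)
            (fun i => glueEquiv C1 C2 (z, w)
              ⟨i.1, Finset.mem_union_left C2 (Finset.mem_of_mem_inter_left i.2)⟩) = 0
         then 0
         else marg p C1 (fun i => glueEquiv C1 C2 (z, w) ⟨i.1, Finset.mem_union_left C2 i.2⟩) *
              marg p C2 (fun i => glueEquiv C1 C2 (z, w) ⟨i.1, Finset.mem_union_right C1 i.2⟩) /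
              marg p (C1 ∩ C2)
                (fun i => glueEquiv C1 C2 (z, w)
                  ⟨i.1, Finset.mem_union_left C2 (Finset.mem_of_mem_inter_left i.2)⟩)))
      = (if marg p (C1 ∩ C2) (fun i => z ⟨i.1, Finset.mem_of_mem_inter_left i.2⟩) = 0
         then 0 else marg p C1 z) := by
    intro z
    set zS : ↥(C1 ∩ C2) → Λ := fun i => z ⟨i.1, Finset.mem_of_mem_inter_left i.2⟩ with hzS
    have eS : ∀ w : ↥(C2 \ C1) → Λ,
        (fun i : ↥(C1 ∩ C2) => glueEquiv C1 C2 (z, w)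
          ⟨i.1, Finset.mem_union_left C2 (Finset.mem_of_mem_inter_left i.2)⟩) = zS := by
      intro w; funext i
      simp only [glueEquiv, Equiv.coe_fn_mk]
      rw [dif_pos (Finset.mem_of_mem_inter_left i.2)]
    have e1 : ∀ w : ↥(C2 \ C1) → Λ,
        (fun i : ↥C1 => glueEquiv C1 C2 (z, w) ⟨i.1, Finset.mem_union_left C2 i.2⟩) = z := by
      intro w; funext i
      simp only [glueEquiv, Equiv.coe_fn_mk]
      rw [dif_pos i.2]
    have e2 : ∀ w : ↥(C2 \ C1) → Λ,
        (fun i : ↥C2 => glueEquiv C1 C2 (z, w) ⟨i.1, Finset.mem_union_right C1 i.2⟩)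
        = (fun i : ↥C2 => if h : i.1 ∈ C1 then zS ⟨i.1, Finset.mem_inter.2 ⟨h, i.2⟩⟩
            else w ⟨i.1, Finset.mem_sdiff.2 ⟨i.2, h⟩⟩) := by
      intro w; funext i
      simp only [glueEquiv, Equiv.coe_fn_mk]
      rfl
    simp_rw [eS, e1, e2]
    by_cases hs : marg p (C1 ∩ C2) zS = 0
    · simp [hs]
    · rw [if_neg hs]
      simp only [if_neg hs]
      have : ∀ w : ↥(C2 \ C1) → Λ,
          marg p C1 z * marg p C2 (fun i : ↥C2 => if h : i.1 ∈ C1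
              then zS ⟨i.1, Finset.mem_inter.2 ⟨h, i.2⟩⟩
              else w ⟨i.1, Finset.mem_sdiff.2 ⟨i.2, h⟩⟩) / marg p (C1 ∩ C2) zS
          = (marg p C1 z / marg p (C1 ∩ C2) zS) *
            marg p C2 (fun i : ↥C2 => if h : i.1 ∈ C1
              then zS ⟨i.1, Finset.mem_inter.2 ⟨h, i.2⟩⟩
              else w ⟨i.1, Finset.mem_sdiff.2 ⟨i.2, h⟩⟩) := by
        intro w; ring
      simp_rw [this]
      rw [← Finset.mul_sum, marg_marg p C1 C2 zS]
      field_simp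
  simp_rw [hstep]
  calc (∑ z : ↥C1 → Λ, if marg p (C1 ∩ C2)
          (fun i => z ⟨i.1, Finset.mem_of_mem_inter_left i.2⟩) = 0 then 0 else marg p C1 z)
      ≤ ∑ z : ↥C1 → Λ, marg p C1 z := by
        refine Finset.sum_le_sum fun z _ => ?_
        split
        · exact marg_nonneg p hp C1 z
        · exact le_refl _
    _ = 1 := by rw [sum_marg]; exact hsum

lemma KL_nonneg {α : Type*} [Fintype α] (q r : α → ℝ) (hq : ∀ x, 0 ≤ q x)
    (hr : ∀ x, 0 ≤ r x) (hqr : ∀ x, r x = 0 → q x = 0)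
    (hq1 : ∑ x, q x = 1) (hr1 : ∑ x, r x ≤ 1) : 0 ≤ KL q r := by
  have h : ∀ x, q x - r x ≤ q x * Real.log (q x / r x) := by
    intro x
    rcases eq_or_lt_of_le (hq x) with h0 | h0
    · rw [← h0]; simpa using hr x
    · have hrx : 0 < r x := (hr x).lt_of_ne fun h => by
        have := hqr x h.symm
        rw [this] at h0
        exact absurd h0 (lt_irrefl 0)
      have hlog := Real.log_le_sub_one_of_pos (div_pos hrx h0)
      rw [Real.log_div (ne_of_gt hrx) (ne_of_gt h0)] at hlog
      have h2 : 1 - r x / q x ≤ Real.log (q x / r x) := by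
        rw [Real.log_div (ne_of_gt h0) (ne_of_gt hrx)]
        linarith
      have h3 : q x * (1 - r x / q x) ≤ q x * Real.log (q x / r x) :=
        mul_le_mul_of_nonneg_left h2 (le_of_lt h0)
      have h4 : q x * (1 - r x / q x) = q x - r x := by field_simp
      linarith
  have hsum2 := Finset.sum_le_sum (fun x (_ : x ∈ Finset.univ) => h x)
  rw [Finset.sum_sub_distrib] at hsum2
  unfold KL
  linarith

end aux3

/-- for index sets with nonempty intersection `S = C₁ ∩ C₂`, the KL
divergence between `P(X_{C₁∪C₂})` and the two-cluster junction tree distribution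
`P_J = P(x_{C₁})·P(x_{C₂})/P(x_S)` equals
`I(X_{C₁∪C₂}) − [I(X_{C₁}) + I(X_{C₂}) − I(X_{C₁∩C₂})]`, and this is nonnegative. -/
theorem kl_junction_two_clusters {V Λ : Type*} [Fintype V] [DecidableEq V] [Fintype Λ] [DecidableEq Λ]
    (p : (V → Λ) → ℝ) (hp : ∀ x, 0 ≤ p x) (hsum : ∑ x, p x = 1)
    (C1 C2 : Finset V) (hne : (C1 ∩ C2).Nonempty) :
    KL (marg p (C1 ∪ C2))
      (fun y : ((C1 ∪ C2 : Finset V) → Λ) =>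
        if marg p (C1 ∩ C2)
            (fun i => y ⟨i.1, Finset.mem_union_left C2 (Finset.mem_of_mem_inter_left i.2)⟩) = 0
        then 0
        else
          marg p C1 (fun i => y ⟨i.1, Finset.mem_union_left C2 i.2⟩) *
          marg p C2 (fun i => y ⟨i.1, Finset.mem_union_right C1 i.2⟩) /
          marg p (C1 ∩ C2)
            (fun i => y ⟨i.1, Finset.mem_union_left C2 (Finset.mem_of_mem_inter_left i.2)⟩))
      = info p (C1 ∪ C2) - (info p C1 + info p C2 - info p (C1 ∩ C2))
    ∧ 0 ≤ info p (C1 ∪ C2) - (info p C1 + info p C2 - info p (C1 ∩ C2)) := by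
  set r : ((C1 ∪ C2 : Finset V) → Λ) → ℝ := fun y =>
        if marg p (C1 ∩ C2)
            (fun i => y ⟨i.1, Finset.mem_union_left C2 (Finset.mem_of_mem_inter_left i.2)⟩) = 0
        then 0
        else
          marg p C1 (fun i => y ⟨i.1, Finset.mem_union_left C2 i.2⟩) *
          marg p C2 (fun i => y ⟨i.1, Finset.mem_union_right C1 i.2⟩) /
          marg p (C1 ∩ C2)
            (fun i => y ⟨i.1, Finset.mem_union_left C2 (Finset.mem_of_mem_inter_left i.2)⟩)
    with hr
  -- Step 1: the KL divergence as a sum over full configurations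
  have h0 : KL (marg p (C1 ∪ C2)) r = ∑ x : V → Λ, p x *
      Real.log (margAt p (C1 ∪ C2) x /
        (if margAt p (C1 ∩ C2) x = 0 then 0
         else margAt p C1 x * margAt p C2 x / margAt p (C1 ∩ C2) x)) := by
    rw [show KL (marg p (C1 ∪ C2)) r
        = ∑ y : ((C1 ∪ C2 : Finset V) → Λ), marg p (C1 ∪ C2) y *
          (fun y' => Real.log (marg p (C1 ∪ C2) y' / r y')) y from rfl]
    rw [sum_marg_mul p (C1 ∪ C2) (fun y' => Real.log (marg p (C1 ∪ C2) y' / r y'))]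
    rfl
  -- Step 2: pointwise expansion of the logarithm
  have h1 : ∑ x : V → Λ, p x *
      Real.log (margAt p (C1 ∪ C2) x /
        (if margAt p (C1 ∩ C2) x = 0 then 0
         else margAt p C1 x * margAt p C2 x / margAt p (C1 ∩ C2) x))
      = ∑ x : V → Λ, (p x * Real.log (margAt p (C1 ∪ C2) x)
          - p x * Real.log (margAt p C1 x)
          - p x * Real.log (margAt p C2 x)
          + p x * Real.log (margAt p (C1 ∩ C2) x)) := by
    refine Finset.sum_congr rfl fun x _ => ?_
    rcases (hp x).eq_or_lt with h | h
    · rw [← h]; ring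
    · have mU : 0 < margAt p (C1 ∪ C2) x := lt_of_lt_of_le h (le_margAt p hp _ x)
      have m1 : 0 < margAt p C1 x := lt_of_lt_of_le h (le_margAt p hp _ x)
      have m2 : 0 < margAt p C2 x := lt_of_lt_of_le h (le_margAt p hp _ x)
      have mS : 0 < margAt p (C1 ∩ C2) x := lt_of_lt_of_le h (le_margAt p hp _ x)
      rw [if_neg (ne_of_gt mS)]
      rw [Real.log_div (ne_of_gt mU) (ne_of_gt (div_pos (mul_pos m1 m2) mS)),
        Real.log_div (ne_of_gt (mul_pos m1 m2)) (ne_of_gt mS),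
        Real.log_mul (ne_of_gt m1) (ne_of_gt m2)]
      ring
  -- Step 3: identify the four sums with entropies
  have h2 : ∑ x : V → Λ, (p x * Real.log (margAt p (C1 ∪ C2) x)
          - p x * Real.log (margAt p C1 x)
          - p x * Real.log (margAt p C2 x)
          + p x * Real.log (margAt p (C1 ∩ C2) x))
      = entH (marg p C1) + entH (marg p C2) - entH (marg p (C1 ∩ C2))
        - entH (marg p (C1 ∪ C2)) := by
    rw [Finset.sum_add_distrib, Finset.sum_sub_distrib, Finset.sum_sub_distrib]
    have eU := entH_marg p (C1 ∪ C2)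
    have e1 := entH_marg p C1
    have e2 := entH_marg p C2
    have eS := entH_marg p (C1 ∩ C2)
    linarith
  have hmain : KL (marg p (C1 ∪ C2)) r
      = info p (C1 ∪ C2) - (info p C1 + info p C2 - info p (C1 ∩ C2)) := by
    rw [h0, h1, h2]
    unfold info
    have hincl : (∑ i ∈ C1 ∪ C2, entH (marg p {i})) + ∑ i ∈ C1 ∩ C2, entH (marg p {i})
        = (∑ i ∈ C1, entH (marg p {i})) + ∑ i ∈ C2, entH (marg p {i}) :=
      Finset.sum_union_inter
    linarith
  refine ⟨hmain, ?_⟩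
  rw [← hmain]
  -- nonnegativity of the KL divergence
  refine KL_nonneg (marg p (C1 ∪ C2)) r (fun y => marg_nonneg p hp _ y) ?_ ?_ ?_ ?_
  · intro y
    rw [hr]
    dsimp only
    split
    · exact le_refl 0
    · exact div_nonneg (mul_nonneg (marg_nonneg p hp C1 _) (marg_nonneg p hp C2 _))
        (marg_nonneg p hp (C1 ∩ C2) _)
  · intro y hy
    rw [hr] at hy
    dsimp only at hy
    have hq0 : 0 ≤ marg p (C1 ∪ C2) y := marg_nonneg p hp _ y
    by_cases hs : marg p (C1 ∩ C2)
        (fun i => y ⟨i.1, Finset.mem_union_left C2 (Finset.mem_of_mem_inter_left i.2)⟩) = 0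
    · have hle := marg_mono p hp
        (show C1 ∩ C2 ⊆ C1 ∪ C2 from
          fun i hi => Finset.mem_union_left C2 (Finset.mem_of_mem_inter_left hi)) y
      exact le_antisymm (le_of_le_of_eq hle hs) hq0
    · rw [if_neg hs] at hy
      rcases mul_eq_zero.1 ((div_eq_zero_iff.1 hy).resolve_right hs) with h1 | h1
      · have hle := marg_mono p hp
          (show C1 ⊆ C1 ∪ C2 from fun i hi => Finset.mem_union_left C2 hi) y
        exact le_antisymm (le_of_le_of_eq hle h1) hq0
      · have hle := marg_mono p hp
          (show C2 ⊆ C1 ∪ C2 from fun i hi => Finset.mem_union_right C1 hi) y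
        exact le_antisymm (le_of_le_of_eq hle h1) hq0
  · rw [sum_marg]; exact hsum
  · rw [hr]; exact sum_r_le_one p hp hsum C1 C2
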